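/- Let d ≥ 1 and let a : Fin d → ℚ be a nonincreasing nonnegative sequence with weight |a| > 0. Then a nonincreasing nonnegative sequence b : Fin d → ℚ belongs to the cone C(a) (i.e. |a|·(b 0 + … + b n) ≤ |b|·(a 0 + … + a n) for every n < d) if and only if there exist nonnegative rational coefficients τ_L, indexed by the compositions L of d, such that b = Σ_L τ_L · v(L,a). In other words, C(a) is the rational cone generated by the finite set { v(L,a) : L a composition of d }. -/

import Mathlib

open Finset

/-- `vSeq L a` is the sequence `v(L,a)` of length `d`: it is constant on each block of the
composition `L` of `d`, and its value on block `i` is the average of `a` over that block,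
i.e. (sum of `a` over block `i`) divided by the length `lᵢ` of block `i`. -/
noncomputable def vSeq {d : ℕ} (L : Composition d) (a : Fin d → ℚ) : Fin d → ℚ :=
  fun i => (∑ j : Fin d, if L.index j = L.index i then a j else 0) / (L.blocksFun (L.index i) : ℚ)

namespace ConeAux
variable {d : ℕ}


/-- the last index of `Fin d` (for `d ≥ 1`). -/
def lastIdx (hd : 1 ≤ d) : Fin d := ⟨d - 1, by omega⟩

lemma le_lastIdx (hd : 1 ≤ d) (i : Fin d) : i ≤ lastIdx hd := by
  have := i.2; simp [lastIdx, Fin.le_def]; omega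

lemma Iic_lastIdx (hd : 1 ≤ d) : Finset.Iic (lastIdx hd) = Finset.univ := by
  apply Finset.eq_univ_iff_forall.2
  intro i; simpa using le_lastIdx hd i

/-- successor within `Fin d`, staying put at the last index. -/
def succ' (i : Fin d) : Fin d := if h : i.val + 1 < d then ⟨i.val + 1, h⟩ else i

lemma le_succ' (i : Fin d) : i ≤ succ' i := by
  unfold succ'; split <;> simp [Fin.le_def]

lemma antitone_of_succ' {f : Fin d → ℚ} (h : ∀ i, f (succ' i) ≤ f i) : Antitone f := by
  rcases Nat.eq_zero_or_pos d with rfl | hd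
  · intro i; exact absurd i.2 (by omega)
  have key : ∀ k : ℕ, ∀ (hk : k < d) (hk' : k + 1 < d), f ⟨k+1, hk'⟩ ≤ f ⟨k, hk⟩ := by
    intro k hk hk'
    have := h ⟨k, hk⟩
    simpa [succ', dif_pos hk'] using this
  -- monotone chain
  intro i j hij
  rcases i with ⟨i, hi⟩; rcases j with ⟨j, hj⟩
  simp only [Fin.le_def] at hij ⊢
  clear h
  induction j with
  | zero => have : i = 0 := by omega
            subst this; simp
  | succ m ih =>
    rcases Nat.lt_or_ge i (m+1) with hlt | hge
    · have hm : m < d := by omega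
      have : f ⟨m+1, hj⟩ ≤ f ⟨m, hm⟩ := key m hm hj
      exact le_trans this (ih hm (by omega))
    · have : i = m + 1 := by omega
      subst this; simp

/-- A down-closed subset of `Fin d` is an initial segment. -/
lemma mem_downclosed_iff {S : Finset (Fin d)} (hdc : ∀ ⦃j j' : Fin d⦄, j' ≤ j → j ∈ S → j' ∈ S)
    (i : Fin d) : i ∈ S ↔ i.val < S.card := by
  constructor
  · intro hi
    have hsub : Finset.Iic i ⊆ S := fun j hj => hdc (Finset.mem_Iic.1 hj) hi
    have := Finset.card_le_card hsub
    rw [Fin.card_Iic] at this; omega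
  · intro hi
    by_contra hns
    have hsub : S ⊆ Finset.Iio i := by
      intro j hj
      rw [Finset.mem_Iio]
      by_contra hij
      exact hns (hdc (le_of_not_gt hij) hj)
    have := Finset.card_le_card hsub
    rw [Fin.card_Iio] at this; omega


variable (L : Composition d)

lemma index_mono : Monotone L.index := by
  intro i j hij
  by_contra h
  push_neg at h
  have h1 : (L.index j : ℕ) + 1 ≤ (L.index i : ℕ) := h
  have h2 : L.sizeUpTo ((L.index j : ℕ) + 1) ≤ L.sizeUpTo (L.index i) :=
    L.monotone_sizeUpTo h1
  have h3 : L.sizeUpTo (L.index i) ≤ i := L.sizeUpTo_index_le i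
  have h4 : (j : ℕ) < L.sizeUpTo ((L.index j : ℕ) + 1) := L.lt_sizeUpTo_index_succ j
  have : (i : ℕ) ≤ j := hij
  omega

lemma index_val_eq {i : Fin d} {k : ℕ} (h1 : L.sizeUpTo k ≤ i) (h2 : (i : ℕ) < L.sizeUpTo (k+1)) :
    (L.index i : ℕ) = k := by
  have h5 : (i : ℕ) < L.sizeUpTo ((L.index i : ℕ) + 1) := L.lt_sizeUpTo_index_succ i
  have h6 : L.sizeUpTo (L.index i) ≤ i := L.sizeUpTo_index_le i
  rcases lt_trichotomy ((L.index i : ℕ)) k with h | h | h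
  · have : L.sizeUpTo ((L.index i : ℕ) + 1) ≤ L.sizeUpTo k := L.monotone_sizeUpTo h
    omega
  · exact h
  · have : L.sizeUpTo (k+1) ≤ L.sizeUpTo (L.index i) := L.monotone_sizeUpTo h
    omega

lemma card_fiber_index (k : Fin L.length) :
    (Finset.univ.filter fun j => L.index j = k).card = L.blocksFun k := by
  have hset : (Finset.univ.filter fun j => L.index j = k)
      = Finset.univ.image (L.embedding k) := by
    ext j
    simp only [Finset.mem_filter, Finset.mem_univ, true_and, Finset.mem_image]
    constructor
    · intro h
      have : j ∈ Set.range (L.embedding k) := by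
        rw [Composition.mem_range_embedding_iff']; exact h.symm
      rcases this with ⟨x, hx⟩
      exact ⟨x, hx⟩
    · rintro ⟨x, rfl⟩
      exact L.index_embedding k x
  rw [hset, Finset.card_image_of_injective _ (L.embedding k).injective]
  simp

/-- The block (as a `Finset`) containing `i`. -/
def blockOf (i : Fin d) : Finset (Fin d) :=
  Finset.univ.filter fun j => L.index j = L.index i

lemma mem_blockOf {i j : Fin d} : j ∈ blockOf L i ↔ L.index j = L.index i := by
  simp [blockOf]

lemma mem_blockOf_self (i : Fin d) : i ∈ blockOf L i := by simp [blockOf]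

lemma blockOf_nonempty (i : Fin d) : (blockOf L i).Nonempty := ⟨i, mem_blockOf_self L i⟩

lemma blockOf_card_pos (i : Fin d) : 0 < ((blockOf L i).card : ℚ) := by
  exact_mod_cast Finset.card_pos.2 (blockOf_nonempty L i)

lemma blockOf_eq {i j : Fin d} (h : L.index i = L.index j) : blockOf L i = blockOf L j := by
  unfold blockOf; simp [h]

lemma vSeq_eq (a : Fin d → ℚ) (i : Fin d) :
    vSeq L a i = (∑ j ∈ blockOf L i, a j) / ((blockOf L i).card : ℚ) := by
  unfold vSeq
  rw [← Finset.sum_filter]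
  congr 1
  · rw [← card_fiber_index L (L.index i)]; rfl

lemma vSeq_const (a : Fin d → ℚ) {i j : Fin d} (h : L.index i = L.index j) :
    vSeq L a i = vSeq L a j := by
  rw [vSeq_eq, vSeq_eq, blockOf_eq L h]

lemma vSeq_nonneg (a : Fin d → ℚ) (ha : ∀ i, 0 ≤ a i) (i : Fin d) : 0 ≤ vSeq L a i := by
  rw [vSeq_eq]
  apply div_nonneg (Finset.sum_nonneg fun j _ => ha j) (by positivity)

/-- Sum of `vSeq` over a union of blocks equals the sum of `a`. -/
lemma sum_vSeq_saturated (a : Fin d → ℚ) (T : Finset (Fin d))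
    (hT : ∀ i ∈ T, blockOf L i ⊆ T) :
    ∑ i ∈ T, vSeq L a i = ∑ i ∈ T, a i := by
  have step1 : ∑ i ∈ T, vSeq L a i
      = ∑ i ∈ T, ∑ j : Fin d, (if L.index j = L.index i then a j / ((blockOf L i).card : ℚ) else 0) := by
    apply Finset.sum_congr rfl
    intro i _
    rw [vSeq_eq, Finset.sum_div, ← Finset.sum_filter]
    rfl
  rw [step1, Finset.sum_comm]
  have step2 : ∀ j : Fin d,
      (∑ i ∈ T, if L.index j = L.index i then a j / ((blockOf L i).card : ℚ) else 0)
      = if j ∈ T then a j else 0 := by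
    intro j
    have hcongr : (∑ i ∈ T, if L.index j = L.index i then a j / ((blockOf L i).card : ℚ) else 0)
        = ∑ i ∈ T, (if L.index j = L.index i then a j / ((blockOf L j).card : ℚ) else 0) := by
      apply Finset.sum_congr rfl
      intro i _
      by_cases h : L.index j = L.index i
      · simp only [if_pos h, blockOf_eq L h.symm]
      · simp [h]
    rw [hcongr, ← Finset.sum_filter, Finset.sum_const]
    by_cases hj : j ∈ T
    · have hfil : T.filter (fun i => L.index j = L.index i) = blockOf L j := by
        ext i
        simp only [Finset.mem_filter, mem_blockOf]
        constructor
        · rintro ⟨-, h⟩; exact h.symm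
        · intro h; exact ⟨hT j hj ((mem_blockOf L).2 h), h.symm⟩
      rw [hfil, if_pos hj, nsmul_eq_mul, mul_div_cancel₀]
      exact ne_of_gt (blockOf_card_pos L j)
    · have hfil : T.filter (fun i => L.index j = L.index i) = ∅ := by
        ext i
        simp only [Finset.mem_filter, Finset.notMem_empty, iff_false, not_and]
        intro hi h
        exact hj (hT i hi ((mem_blockOf L).2 h))
      rw [hfil, if_neg hj]
      simp
  rw [Finset.sum_congr rfl fun j _ => step2 j]
  rw [Finset.sum_ite_mem, Finset.univ_inter]

lemma sum_vSeq (a : Fin d → ℚ) : ∑ i, vSeq L a i = ∑ i, a i :=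
  sum_vSeq_saturated L a Finset.univ (fun _ _ => Finset.subset_univ _)


/-! ### Prefix sums -/

/-- `U L n` is the part of `Iic n` lying in blocks other than that of `n`. -/
def uSet (n : Fin d) : Finset (Fin d) :=
  (Finset.Iic n).filter fun i => L.index i ≠ L.index n

/-- `topSet L n` is the part of the block of `n` lying in `Iic n`. -/
def topSet (n : Fin d) : Finset (Fin d) := (blockOf L n).filter (· ≤ n)

def botSet (n : Fin d) : Finset (Fin d) := (blockOf L n).filter fun j => ¬ j ≤ n

lemma uSet_union_topSet (n : Fin d) : uSet L n ∪ topSet L n = Finset.Iic n := by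
  have h1 : (Finset.Iic n).filter (fun i => ¬ L.index i ≠ L.index n) = topSet L n := by
    ext i
    simp only [Finset.mem_filter, Finset.mem_Iic, topSet, mem_blockOf, not_not]
    tauto
  rw [← h1, uSet, Finset.filter_union_filter_not_eq]

lemma disjoint_uSet_topSet (n : Fin d) : Disjoint (uSet L n) (topSet L n) := by
  rw [Finset.disjoint_left]
  intro x hx hx'
  simp only [uSet, Finset.mem_filter] at hx
  simp only [topSet, Finset.mem_filter, mem_blockOf] at hx'
  exact hx.2 hx'.1

lemma disjoint_uSet_blockOf (n : Fin d) : Disjoint (uSet L n) (blockOf L n) := by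
  rw [Finset.disjoint_left]
  intro x hx hx'
  simp only [uSet, Finset.mem_filter] at hx
  exact hx.2 ((mem_blockOf L).1 hx')

lemma sum_Iic_split (n : Fin d) (f : Fin d → ℚ) :
    ∑ i ∈ Finset.Iic n, f i = (∑ i ∈ uSet L n, f i) + ∑ i ∈ topSet L n, f i := by
  rw [← uSet_union_topSet L n, Finset.sum_union (disjoint_uSet_topSet L n)]

lemma blockOf_split (n : Fin d) (f : Fin d → ℚ) :
    ∑ i ∈ blockOf L n, f i = (∑ i ∈ topSet L n, f i) + ∑ i ∈ botSet L n, f i := by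
  rw [← Finset.sum_union, topSet, botSet, Finset.filter_union_filter_not_eq]
  rw [Finset.disjoint_left]
  intro x hx hx'
  simp only [topSet, botSet, Finset.mem_filter] at hx hx'
  exact hx'.2 hx.2

lemma uSet_saturated (n : Fin d) : ∀ i ∈ uSet L n, blockOf L i ⊆ uSet L n := by
  intro i hi j hj
  simp only [uSet, Finset.mem_filter, Finset.mem_Iic] at hi ⊢
  rw [mem_blockOf] at hj
  have hjn : j ≤ n := by
    by_contra hc
    have hnj : n ≤ j := le_of_not_ge hc
    have h1 : L.index i ≤ L.index n := index_mono L hi.1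
    have h2 : L.index n ≤ L.index j := index_mono L hnj
    rw [hj] at h2
    exact hi.2 (le_antisymm h1 h2)
  exact ⟨hjn, by rw [hj]; exact hi.2⟩

/-- Key identity for prefix sums of `vSeq`. -/
lemma sum_Iic_vSeq (a : Fin d → ℚ) (n : Fin d) :
    ∑ i ∈ Finset.Iic n, vSeq L a i
      = (∑ i ∈ uSet L n, a i) + ((topSet L n).card : ℚ) * vSeq L a n := by
  rw [sum_Iic_split L n (vSeq L a), sum_vSeq_saturated L a (uSet L n) (uSet_saturated L n)]
  congr 1
  have : ∀ i ∈ topSet L n, vSeq L a i = vSeq L a n := by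
    intro i hi
    simp only [topSet, Finset.mem_filter, mem_blockOf] at hi
    exact vSeq_const L a hi.1
  rw [Finset.sum_congr rfl this, Finset.sum_const, nsmul_eq_mul]

lemma card_topSet_add_card_botSet (n : Fin d) :
    (topSet L n).card + (botSet L n).card = (blockOf L n).card := by
  rw [topSet, botSet, Finset.card_filter_add_card_filter_not]

lemma mem_topSet_self (n : Fin d) : n ∈ topSet L n := by
  simp [topSet, mem_blockOf_self]

lemma topSet_estimate (a : Fin d → ℚ) (ha : Antitone a) (n : Fin d) :
    ((topSet L n).card : ℚ) * a n ≤ ∑ i ∈ topSet L n, a i := by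
  have : ∀ i ∈ topSet L n, a n ≤ a i := by
    intro i hi
    simp only [topSet, Finset.mem_filter] at hi
    exact ha hi.2
  calc ((topSet L n).card : ℚ) * a n = (topSet L n).card • a n := by
        rw [nsmul_eq_mul]
    _ ≤ ∑ i ∈ topSet L n, a i := Finset.card_nsmul_le_sum _ _ _ this

lemma botSet_estimate (a : Fin d → ℚ) (ha : Antitone a) (n : Fin d) :
    ∑ i ∈ botSet L n, a i ≤ ((botSet L n).card : ℚ) * a n := by
  have : ∀ i ∈ botSet L n, a i ≤ a n := by
    intro i hi
    simp only [botSet, Finset.mem_filter] at hi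
    exact ha (le_of_not_ge hi.2)
  calc ∑ i ∈ botSet L n, a i ≤ (botSet L n).card • a n :=
        Finset.sum_le_card_nsmul _ _ _ this
    _ = ((botSet L n).card : ℚ) * a n := by rw [nsmul_eq_mul]

/-- prefix sums of `vSeq` are dominated by those of `a`. -/
lemma sum_Iic_vSeq_le (a : Fin d → ℚ) (ha : Antitone a) (n : Fin d) :
    ∑ i ∈ Finset.Iic n, vSeq L a i ≤ ∑ i ∈ Finset.Iic n, a i := by
  rw [sum_Iic_vSeq L a n, sum_Iic_split L n a]
  have hmain : ((topSet L n).card : ℚ) * vSeq L a n ≤ ∑ i ∈ topSet L n, a i := by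
    rw [vSeq_eq]
    have hs : 0 < ((blockOf L n).card : ℚ) := blockOf_card_pos L n
    rw [mul_div_assoc', div_le_iff₀ hs]
    have h1 := topSet_estimate L a ha n
    have h2 := botSet_estimate L a ha n
    have hS : ∑ i ∈ blockOf L n, a i = (∑ i ∈ topSet L n, a i) + ∑ i ∈ botSet L n, a i :=
      blockOf_split L n a
    have hsum : ((blockOf L n).card : ℚ) = ((topSet L n).card : ℚ) + ((botSet L n).card : ℚ) := by
      exact_mod_cast (card_topSet_add_card_botSet L n).symm
    have hm : (0:ℚ) ≤ ((topSet L n).card : ℚ) := by positivity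
    have hcb : (0:ℚ) ≤ ((botSet L n).card : ℚ) := by positivity
    rw [hS, hsum]
    have A1 := mul_le_mul_of_nonneg_left h2 hm
    have A2 := mul_le_mul_of_nonneg_left h1 hcb
    have A3 : ((topSet L n).card : ℚ) * (((botSet L n).card : ℚ) * a n)
        = ((botSet L n).card : ℚ) * (((topSet L n).card : ℚ) * a n) := by ring
    have A4 : ((topSet L n).card : ℚ) * ((∑ i ∈ topSet L n, a i) + ∑ i ∈ botSet L n, a i)
        = ((topSet L n).card : ℚ) * (∑ i ∈ topSet L n, a i)
          + ((topSet L n).card : ℚ) * (∑ i ∈ botSet L n, a i) := by ring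
    have A5 : (∑ i ∈ topSet L n, a i) * (((topSet L n).card : ℚ) + ((botSet L n).card : ℚ))
        = ((topSet L n).card : ℚ) * (∑ i ∈ topSet L n, a i)
          + ((botSet L n).card : ℚ) * (∑ i ∈ topSet L n, a i) := by ring
    linarith
  linarith

/-- `vSeq` is antitone when `a` is. -/
lemma vSeq_antitone (a : Fin d → ℚ) (ha : Antitone a) : Antitone (vSeq L a) := by
  intro i j hij
  by_cases h : L.index i = L.index j
  · exact le_of_eq (vSeq_const L a h.symm)
  · have hlt : L.index i < L.index j := lt_of_le_of_ne (index_mono L hij) h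
    have key : ∀ x ∈ blockOf L i, ∀ y ∈ blockOf L j, a y ≤ a x := by
      intro x hx y hy
      rw [mem_blockOf] at hx hy
      apply ha
      by_contra hc
      have : y ≤ x := le_of_not_ge hc
      have := index_mono L this
      rw [hx, hy] at this
      exact absurd (lt_of_lt_of_le hlt this) (lt_irrefl _)
    rw [vSeq_eq, vSeq_eq]
    rw [div_le_div_iff₀ (blockOf_card_pos L j) (blockOf_card_pos L i)]
    calc (∑ y ∈ blockOf L j, a y) * ((blockOf L i).card : ℚ)
        = ∑ y ∈ blockOf L j, ((blockOf L i).card : ℚ) * a y := by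
          rw [Finset.sum_mul]; apply Finset.sum_congr rfl; intros; ring
      _ ≤ ∑ y ∈ blockOf L j, ∑ x ∈ blockOf L i, a x := by
          apply Finset.sum_le_sum
          intro y hy
          calc ((blockOf L i).card : ℚ) * a y = (blockOf L i).card • a y := by rw [nsmul_eq_mul]
            _ ≤ ∑ x ∈ blockOf L i, a x :=
                Finset.card_nsmul_le_sum _ _ _ (fun x hx => key x hx y hy)
      _ = (∑ x ∈ blockOf L i, a x) * ((blockOf L j).card : ℚ) := by
          rw [Finset.sum_const, nsmul_eq_mul]; ring


lemma sum_uSet_nonneg (f : Fin d → ℚ) (hf : ∀ m : Fin d, 0 ≤ ∑ j ∈ Finset.Iic m, f j)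
    (n : Fin d) : 0 ≤ ∑ j ∈ uSet L n, f j := by
  rcases (uSet L n).eq_empty_or_nonempty with h | h
  · simp [h]
  · have hm0 := Finset.max'_mem _ h
    set m0 := (uSet L n).max' h with hm0def
    have hU : uSet L n = Finset.Iic m0 := by
      ext j
      simp only [Finset.mem_Iic]
      constructor
      · intro hj; exact Finset.le_max' _ j hj
      · intro hj
        simp only [uSet, Finset.mem_filter, Finset.mem_Iic] at hm0 ⊢
        refine ⟨le_trans hj hm0.1, ?_⟩
        intro hc
        apply hm0.2
        have h1 : L.index j ≤ L.index m0 := index_mono L hj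
        have h2 : L.index m0 ≤ L.index j := by
          calc L.index m0 ≤ L.index n := index_mono L hm0.1
            _ = L.index j := hc.symm
        exact (le_antisymm h2 h1).trans hc
    rw [hU]; exact hf m0

lemma union_blockOf_eq_Iic_max (n : Fin d) :
    uSet L n ∪ blockOf L n = Finset.Iic ((blockOf L n).max' (blockOf_nonempty L n)) := by
  set q := (blockOf L n).max' (blockOf_nonempty L n) with hqdef
  have hq : n ≤ q := Finset.le_max' _ n (mem_blockOf_self L n)
  ext j
  simp only [Finset.mem_union, uSet, Finset.mem_filter, Finset.mem_Iic, mem_blockOf]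
  constructor
  · rintro (⟨h1, h2⟩ | h)
    · exact le_trans h1 hq
    · exact Finset.le_max' _ j ((mem_blockOf L).2 h)
  · intro hj
    by_cases hidx : L.index j = L.index n
    · right; exact hidx
    · left
      refine ⟨?_, hidx⟩
      by_contra hc
      have hnj : n ≤ j := le_of_not_ge hc
      have h1 : L.index n ≤ L.index j := index_mono L hnj
      have h2 : L.index j ≤ L.index q := index_mono L hj
      have h3 : L.index q = L.index n := (mem_blockOf L).1 (Finset.max'_mem _ (blockOf_nonempty L n))
      exact hidx (le_antisymm (h3 ▸ h2) h1)

/-- If the slack inequality is tight at `n`, then the prefix sums of `vSeq L a` and of `a`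
agree at `n`, where the blocks of `L` are the level sets of `b`. -/
lemma sum_Iic_vSeq_eq_of_tight (a b : Fin d → ℚ) (ha : Antitone a)
    (hbL : ∀ i j : Fin d, L.index i = L.index j ↔ b i = b j)
    (hB : 0 < ∑ i, b i)
    (hs : ∀ m : Fin d, 0 ≤ (∑ i, b i) * (∑ i ∈ Finset.Iic m, a i)
        - (∑ i, a i) * (∑ i ∈ Finset.Iic m, b i))
    (n : Fin d)
    (hn : (∑ i, b i) * (∑ i ∈ Finset.Iic n, a i)
        - (∑ i, a i) * (∑ i ∈ Finset.Iic n, b i) = 0) :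
    ∑ i ∈ Finset.Iic n, vSeq L a i = ∑ i ∈ Finset.Iic n, a i := by
  classical
  set A := ∑ i, a i with hA
  set B := ∑ i, b i with hBdef
  set δ : Fin d → ℚ := fun j => B * a j - A * b j with hδ
  have hδsum : ∀ m : Fin d, ∑ j ∈ Finset.Iic m, δ j
      = B * (∑ i ∈ Finset.Iic m, a i) - A * (∑ i ∈ Finset.Iic m, b i) := by
    intro m; simp [hδ, Finset.sum_sub_distrib, Finset.mul_sum]
  have hs' : ∀ m : Fin d, 0 ≤ ∑ j ∈ Finset.Iic m, δ j := fun m => by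
    rw [hδsum m]; exact hs m
  have hn' : ∑ j ∈ Finset.Iic n, δ j = 0 := by rw [hδsum n]; exact hn
  rw [sum_Iic_vSeq L a n, sum_Iic_split L n a]
  have hspos := blockOf_card_pos L n
  suffices hkey : ((topSet L n).card : ℚ) * vSeq L a n = ∑ i ∈ topSet L n, a i by
    rw [hkey]
  by_cases hsub : blockOf L n ⊆ Finset.Iic n
  · have htop : topSet L n = blockOf L n := by
      ext i; simp only [topSet, Finset.mem_filter]
      exact ⟨fun h => h.1, fun h => ⟨h, Finset.mem_Iic.1 (hsub h)⟩⟩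
    rw [htop, vSeq_eq, ← mul_div_assoc, mul_comm, mul_div_assoc,
      div_self (ne_of_gt hspos), mul_one]
  · obtain ⟨j0, hj0B, hj0n⟩ := Finset.not_subset.1 hsub
    have hbot : (botSet L n).Nonempty :=
      ⟨j0, by simp only [botSet, Finset.mem_filter]
              exact ⟨hj0B, fun hc => hj0n (Finset.mem_Iic.2 hc)⟩⟩
    have hUsum : 0 ≤ ∑ j ∈ uSet L n, δ j := sum_uSet_nonneg L δ hs' n
    set q := (blockOf L n).max' (blockOf_nonempty L n) with hqdef
    have hqsum : (∑ j ∈ uSet L n, δ j) + ∑ j ∈ blockOf L n, δ j = ∑ j ∈ Finset.Iic q, δ j := by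
      rw [← union_blockOf_eq_Iic_max L n, Finset.sum_union (disjoint_uSet_blockOf L n)]
    have htopδ : (∑ j ∈ uSet L n, δ j) + ∑ j ∈ topSet L n, δ j = 0 := by
      rw [← sum_Iic_split]; exact hn'
    have hsplitB := blockOf_split L n δ
    have h_top_le : ∑ j ∈ topSet L n, δ j ≤ 0 := by linarith
    have h_bot_ge : 0 ≤ ∑ j ∈ botSet L n, δ j := by
      have := hs' q; linarith
    have hbconst : ∀ j ∈ blockOf L n, b j = b n := fun j hj =>
      (hbL j n).1 ((mem_blockOf L).1 hj)
    have hδmono : ∀ j ∈ blockOf L n, ∀ j' ∈ blockOf L n, j ≤ j' → δ j' ≤ δ j := by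
      intro j hj j' hj' hle
      have hb' : b j = b j' := by rw [hbconst j hj, hbconst j' hj']
      have haj : a j' ≤ a j := ha hle
      have hB0 : (0:ℚ) ≤ B := le_of_lt hB
      simp only [hδ]
      rw [hb']
      have := mul_le_mul_of_nonneg_left haj hB0
      linarith
    have hn_top : n ∈ topSet L n := mem_topSet_self L n
    have hδn_le : δ n ≤ 0 := by
      have hall : ∀ j ∈ topSet L n, δ n ≤ δ j := by
        intro j hj
        simp only [topSet, Finset.mem_filter] at hj
        exact hδmono j hj.1 n (mem_blockOf_self L n) hj.2
      have h1 : ((topSet L n).card) • δ n ≤ ∑ j ∈ topSet L n, δ j :=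
        Finset.card_nsmul_le_sum _ _ _ hall
      rw [nsmul_eq_mul] at h1
      have hc1 : (1:ℚ) ≤ ((topSet L n).card : ℚ) := by
        exact_mod_cast Finset.card_pos.2 ⟨n, hn_top⟩
      nlinarith
    have hδn_ge : 0 ≤ δ n := by
      have hall : ∀ j ∈ botSet L n, δ j ≤ δ n := by
        intro j hj
        simp only [botSet, Finset.mem_filter] at hj
        exact hδmono n (mem_blockOf_self L n) j hj.1 (le_of_not_ge hj.2)
      have h1 : ∑ j ∈ botSet L n, δ j ≤ ((botSet L n).card) • δ n :=
        Finset.sum_le_card_nsmul _ _ _ hall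
      rw [nsmul_eq_mul] at h1
      have hc1 : (1:ℚ) ≤ ((botSet L n).card : ℚ) := by
        exact_mod_cast Finset.card_pos.2 hbot
      nlinarith
    have hδn : δ n = 0 := le_antisymm hδn_le hδn_ge
    have htop_nonneg : ∀ j ∈ topSet L n, 0 ≤ δ j := by
      intro j hj
      simp only [topSet, Finset.mem_filter] at hj
      rw [← hδn]
      exact hδmono j hj.1 n (mem_blockOf_self L n) hj.2
    have htop0 : ∀ j ∈ topSet L n, δ j = 0 := by
      have hz : ∑ j ∈ topSet L n, δ j = 0 :=
        le_antisymm h_top_le (Finset.sum_nonneg htop_nonneg)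
      exact fun j hj => (Finset.sum_eq_zero_iff_of_nonneg htop_nonneg).1 hz j hj
    have hbot_nonpos : ∀ j ∈ botSet L n, δ j ≤ 0 := by
      intro j hj
      simp only [botSet, Finset.mem_filter] at hj
      rw [← hδn]
      exact hδmono n (mem_blockOf_self L n) j hj.1 (le_of_not_ge hj.2)
    have hbot0 : ∀ j ∈ botSet L n, δ j = 0 := by
      have hz : ∑ j ∈ botSet L n, δ j = 0 :=
        le_antisymm (Finset.sum_nonpos hbot_nonpos) h_bot_ge
      exact fun j hj => (Finset.sum_eq_zero_iff_of_nonpos hbot_nonpos).1 hz j hj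
    have hablock : ∀ j ∈ blockOf L n, a j = A * b n / B := by
      intro j hj
      have hδj : δ j = 0 := by
        by_cases hjn : j ≤ n
        · exact htop0 j (Finset.mem_filter.2 ⟨hj, hjn⟩)
        · exact hbot0 j (Finset.mem_filter.2 ⟨hj, hjn⟩)
      have hbj := hbconst j hj
      simp only [hδ] at hδj
      rw [eq_div_iff (ne_of_gt hB)]
      rw [hbj] at hδj
      linarith
    have hsub2 : topSet L n ⊆ blockOf L n := Finset.filter_subset _ _
    have hStop : ∑ i ∈ topSet L n, a i = ((topSet L n).card : ℚ) * (A * b n / B) := by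
      calc ∑ i ∈ topSet L n, a i = ∑ _i ∈ topSet L n, (A * b n / B) :=
            Finset.sum_congr rfl (fun j hj => hablock j (hsub2 hj))
        _ = ((topSet L n).card : ℚ) * (A * b n / B) := by
            rw [Finset.sum_const, nsmul_eq_mul]
    have hSblock : ∑ i ∈ blockOf L n, a i = ((blockOf L n).card : ℚ) * (A * b n / B) := by
      calc ∑ i ∈ blockOf L n, a i = ∑ _i ∈ blockOf L n, (A * b n / B) :=
            Finset.sum_congr rfl hablock
        _ = ((blockOf L n).card : ℚ) * (A * b n / B) := by
            rw [Finset.sum_const, nsmul_eq_mul]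
    rw [vSeq_eq, hSblock, mul_div_cancel_left₀ _ (ne_of_gt hspos)]
    exact hStop.symm

/-- If `b` vanishes at the last index, so does `vSeq L a` (blocks of `L` = level sets of `b`). -/
lemma vSeq_lastIdx_zero (hd : 1 ≤ d) (a b : Fin d → ℚ) (ha_nonneg : ∀ i, 0 ≤ a i)
    (hbL : ∀ i j : Fin d, L.index i = L.index j ↔ b i = b j)
    (hB : 0 < ∑ i, b i)
    (hs : ∀ m : Fin d, 0 ≤ (∑ i, b i) * (∑ i ∈ Finset.Iic m, a i)
        - (∑ i, a i) * (∑ i ∈ Finset.Iic m, b i))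
    (hlast : b (lastIdx hd) = 0) :
    vSeq L a (lastIdx hd) = 0 := by
  classical
  set n := lastIdx hd with hndef
  set A := ∑ i, a i with hA
  set B := ∑ i, b i with hBdef
  set δ : Fin d → ℚ := fun j => B * a j - A * b j with hδ
  have hδsum : ∀ m : Fin d, ∑ j ∈ Finset.Iic m, δ j
      = B * (∑ i ∈ Finset.Iic m, a i) - A * (∑ i ∈ Finset.Iic m, b i) := by
    intro m; simp [hδ, Finset.sum_sub_distrib, Finset.mul_sum]
  have hs' : ∀ m : Fin d, 0 ≤ ∑ j ∈ Finset.Iic m, δ j := fun m => by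
    rw [hδsum m]; exact hs m
  have hUsum : 0 ≤ ∑ j ∈ uSet L n, δ j := sum_uSet_nonneg L δ hs' n
  set q := (blockOf L n).max' (blockOf_nonempty L n) with hqdef
  have hqn : q = n := le_antisymm (le_lastIdx hd q) (Finset.le_max' _ n (mem_blockOf_self L n))
  have hIicn : ∑ j ∈ Finset.Iic n, δ j = 0 := by
    rw [hδsum n, hndef, Iic_lastIdx hd, ← hA, ← hBdef]
    ring
  have hqsum : (∑ j ∈ uSet L n, δ j) + ∑ j ∈ blockOf L n, δ j = ∑ j ∈ Finset.Iic q, δ j := by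
    rw [← union_blockOf_eq_Iic_max L n, Finset.sum_union (disjoint_uSet_blockOf L n)]
  have hblockδ : ∑ j ∈ blockOf L n, δ j ≤ 0 := by
    rw [hqn] at hqsum
    linarith [hqsum, hIicn]
  have hδnonneg : ∀ j ∈ blockOf L n, 0 ≤ δ j := by
    intro j hj
    have hbj : b j = b n := (hbL j n).1 ((mem_blockOf L).1 hj)
    simp only [hδ]
    rw [hbj, show b n = 0 from hlast]
    have h0 := ha_nonneg j
    have hB0 : (0:ℚ) ≤ B := le_of_lt hB
    nlinarith
  have hzero : ∀ j ∈ blockOf L n, δ j = 0 := by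
    have hz : ∑ j ∈ blockOf L n, δ j = 0 :=
      le_antisymm hblockδ (Finset.sum_nonneg hδnonneg)
    exact fun j hj => (Finset.sum_eq_zero_iff_of_nonneg hδnonneg).1 hz j hj
  have hazero : ∀ j ∈ blockOf L n, a j = 0 := by
    intro j hj
    have h1 := hzero j hj
    have hbj : b j = b n := (hbL j n).1 ((mem_blockOf L).1 hj)
    simp only [hδ] at h1
    rw [hbj, show b n = 0 from hlast] at h1
    have hB' : B ≠ 0 := ne_of_gt hB
    have : B * a j = 0 := by linarith
    exact (mul_eq_zero.1 this).resolve_left hB'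
  rw [vSeq_eq, Finset.sum_eq_zero hazero, zero_div]


/-! ### The composition associated to the level sets of an antitone function -/

variable {L}

/-- distinct values of `b`. -/
def levels (b : Fin d → ℚ) : Finset ℚ := Finset.univ.image b

/-- the number of values of `b` exceeding `b i`. -/
def rnk (b : Fin d → ℚ) (i : Fin d) : ℕ := ((levels b).filter fun v => b i < v).card

lemma rnk_lt (b : Fin d → ℚ) (i : Fin d) : rnk b i < (levels b).card := by
  apply Finset.card_lt_card
  rw [Finset.ssubset_iff_of_subset (Finset.filter_subset _ _)]
  exact ⟨b i, Finset.mem_image.2 ⟨i, Finset.mem_univ i, rfl⟩, by simp⟩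

lemma rnk_mono {b : Fin d → ℚ} (hb : Antitone b) : Monotone (rnk b) := by
  intro i j hij
  apply Finset.card_le_card
  intro v hv
  simp only [Finset.mem_filter] at hv ⊢
  exact ⟨hv.1, lt_of_le_of_lt (hb hij) hv.2⟩

lemma rnk_lt_of_lt {b : Fin d → ℚ} {i j : Fin d} (h : b j < b i) : rnk b i < rnk b j := by
  apply Finset.card_lt_card
  constructor
  · intro v hv
    simp only [Finset.mem_filter] at hv ⊢
    exact ⟨hv.1, lt_trans h hv.2⟩
  · intro hsub
    have : b i ∈ (levels b).filter fun v => b j < v := by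
      simp only [Finset.mem_filter]
      exact ⟨Finset.mem_image.2 ⟨i, Finset.mem_univ i, rfl⟩, h⟩
    have := hsub this
    simp at this

lemma rnk_eq_iff {b : Fin d → ℚ} (i j : Fin d) : rnk b i = rnk b j ↔ b i = b j := by
  constructor
  · intro h
    rcases lt_trichotomy (b i) (b j) with hc | hc | hc
    · exact absurd h (ne_of_gt (rnk_lt_of_lt hc))
    · exact hc
    · exact absurd h (ne_of_lt (rnk_lt_of_lt hc))
  · intro h; unfold rnk; rw [h]

lemma rnk_surj (b : Fin d → ℚ) {k : ℕ} (hk : k < (levels b).card) : ∃ i, rnk b i = k := by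
  classical
  set vr : ℚ → ℕ := fun x => ((levels b).filter fun v => x < v).card with hvr
  have hinj : Set.InjOn vr (levels b) := by
    intro x hx y hy hxy
    by_contra hne
    rcases lt_trichotomy x y with hc | hc | hc
    · -- vr y < vr x
      have : vr y < vr x := by
        apply Finset.card_lt_card
        constructor
        · intro v hv
          simp only [Finset.mem_filter] at hv ⊢
          exact ⟨hv.1, lt_trans hc hv.2⟩
        · intro hsub
          have hmem : y ∈ (levels b).filter fun v => x < v := by
            simp only [Finset.mem_filter]; exact ⟨hy, hc⟩
          have := hsub hmem
          simp at this
      omega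
    · exact hne hc
    · have : vr x < vr y := by
        apply Finset.card_lt_card
        constructor
        · intro v hv
          simp only [Finset.mem_filter] at hv ⊢
          exact ⟨hv.1, lt_trans hc hv.2⟩
        · intro hsub
          have hmem : x ∈ (levels b).filter fun v => y < v := by
            simp only [Finset.mem_filter]; exact ⟨hx, hc⟩
          have := hsub hmem
          simp at this
      omega
  have hsubset : (levels b).image vr ⊆ Finset.range (levels b).card := by
    intro x hx
    rcases Finset.mem_image.1 hx with ⟨y, hy, rfl⟩
    rw [Finset.mem_range]
    apply Finset.card_lt_card
    rw [Finset.ssubset_iff_of_subset (Finset.filter_subset _ _)]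
    exact ⟨y, hy, by simp⟩
  have hcard : ((levels b).image vr).card = (levels b).card := Finset.card_image_of_injOn hinj
  have heq : (levels b).image vr = Finset.range (levels b).card := by
    apply Finset.eq_of_subset_of_card_le hsubset
    rw [hcard, Finset.card_range]
  have : k ∈ (levels b).image vr := by rw [heq]; exact Finset.mem_range.2 hk
  rcases Finset.mem_image.1 this with ⟨x, hx, hxk⟩
  rcases Finset.mem_image.1 hx with ⟨i, _, rfl⟩
  exact ⟨i, hxk⟩

/-- The composition of `d` whose blocks are the level sets of the antitone map `b`. -/
def mkComp (b : Fin d → ℚ) (hb : Antitone b) : Composition d where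
  blocks := List.ofFn fun k : Fin (levels b).card =>
    (Finset.univ.filter fun i => rnk b i = k.val).card
  blocks_pos := by
    intro x hx
    rw [List.mem_ofFn] at hx
    rcases hx with ⟨k, rfl⟩
    rcases rnk_surj b k.2 with ⟨i, hi⟩
    exact Finset.card_pos.2 ⟨i, by simp [hi]⟩
  blocks_sum := by
    rw [List.sum_ofFn, Fin.sum_univ_eq_sum_range
      (fun k => (Finset.univ.filter fun i => rnk b i = k).card)]
    have := Finset.card_eq_sum_card_fiberwise
      (f := rnk b) (s := Finset.univ) (t := Finset.range (levels b).card)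
      (fun i _ => Finset.mem_range.2 (rnk_lt b i))
    simp only [Finset.card_univ, Fintype.card_fin] at this
    exact this.symm

lemma mkComp_length (b : Fin d → ℚ) (hb : Antitone b) :
    (mkComp b hb).length = (levels b).card := by
  simp [mkComp, Composition.length]

lemma mkComp_sizeUpTo (b : Fin d → ℚ) (hb : Antitone b) {k : ℕ} (hk : k ≤ (levels b).card) :
    (mkComp b hb).sizeUpTo k = (Finset.univ.filter fun i => rnk b i < k).card := by
  induction k with
  | zero => simp [Composition.sizeUpTo_zero]
  | succ k ih =>
    have hk' : k < (mkComp b hb).length := by rw [mkComp_length]; omega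
    rw [Composition.sizeUpTo_succ _ hk', ih (by omega)]
    have hblk : (mkComp b hb).blocks[k] = (Finset.univ.filter fun i => rnk b i = k).card := by
      simp [mkComp]
    rw [hblk]
    have hsplit : (Finset.univ.filter fun i : Fin d => rnk b i < k + 1)
        = (Finset.univ.filter fun i => rnk b i < k) ∪ (Finset.univ.filter fun i => rnk b i = k) := by
      ext i
      simp only [Finset.mem_filter, Finset.mem_union, Finset.mem_univ, true_and]
      omega
    rw [hsplit, Finset.card_union_of_disjoint]
    rw [Finset.disjoint_left]
    intro x hx hx'
    simp only [Finset.mem_filter] at hx hx'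
    omega

lemma mkComp_index (b : Fin d → ℚ) (hb : Antitone b) (i : Fin d) :
    (((mkComp b hb).index i) : ℕ) = rnk b i := by
  apply index_val_eq
  · rw [mkComp_sizeUpTo b hb (le_of_lt (rnk_lt b i))]
    have hdc : ∀ ⦃j j' : Fin d⦄, j' ≤ j →
        j ∈ (Finset.univ.filter fun x => rnk b x < rnk b i) →
        j' ∈ (Finset.univ.filter fun x => rnk b x < rnk b i) := by
      intro j j' hle hj
      simp only [Finset.mem_filter, Finset.mem_univ, true_and] at hj ⊢
      exact lt_of_le_of_lt (rnk_mono hb hle) hj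
    by_contra hcon
    push_neg at hcon
    have hmem := (mem_downclosed_iff hdc i).2 hcon
    simp only [Finset.mem_filter, Finset.mem_univ, true_and] at hmem
    omega
  · have hk1 : rnk b i + 1 ≤ (levels b).card := rnk_lt b i
    rw [mkComp_sizeUpTo b hb hk1]
    have hdc : ∀ ⦃j j' : Fin d⦄, j' ≤ j →
        j ∈ (Finset.univ.filter fun x => rnk b x < rnk b i + 1) →
        j' ∈ (Finset.univ.filter fun x => rnk b x < rnk b i + 1) := by
      intro j j' hle hj
      simp only [Finset.mem_filter, Finset.mem_univ, true_and] at hj ⊢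
      exact lt_of_le_of_lt (rnk_mono hb hle) hj
    have := (mem_downclosed_iff hdc i).mp
    simp only [Finset.mem_filter, Finset.mem_univ, true_and] at this
    exact this (by omega)

lemma mkComp_hbL (b : Fin d → ℚ) (hb : Antitone b) (i j : Fin d) :
    (mkComp b hb).index i = (mkComp b hb).index j ↔ b i = b j := by
  rw [← rnk_eq_iff (b := b) i j]
  constructor
  · intro h
    have := congrArg Fin.val h
    rwa [mkComp_index b hb i, mkComp_index b hb j] at this
  · intro h
    apply Fin.ext
    rwa [mkComp_index b hb i, mkComp_index b hb j]


/-! ### The main decomposition -/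

lemma eq_last_of_succ' (hd : 1 ≤ d) {f : Fin d → ℚ} (h : ∀ i, f i = f (succ' i)) :
    ∀ i, f i = f (lastIdx hd) := by
  suffices hk : ∀ k : ℕ, ∀ i : Fin d, i.val + k = d - 1 → f i = f (lastIdx hd) by
    intro i
    exact hk (d - 1 - i.val) i (by have := i.2; omega)
  intro k
  induction k with
  | zero =>
    intro i hi
    congr 1
    apply Fin.ext
    simp only [lastIdx]
    omega
  | succ k ih =>
    intro i hi
    have hlt : i.val + 1 < d := by have := i.2; omega
    have hsucc : succ' i = ⟨i.val + 1, hlt⟩ := by unfold succ'; rw [dif_pos hlt]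
    rw [h i, hsucc]
    exact ih _ (by simp; omega)

/-- the slack of the cone inequality at `n`. -/
def slackQ (a b : Fin d → ℚ) (n : Fin d) : ℚ :=
  (∑ i, b i) * (∑ i ∈ Finset.Iic n, a i) - (∑ i, a i) * (∑ i ∈ Finset.Iic n, b i)

/-- the termination measure. -/
def mu (hd : 1 ≤ d) (a b : Fin d → ℚ) : ℕ :=
  (Finset.univ.filter fun n => slackQ a b n ≠ 0).card
  + (Finset.univ.filter fun i : Fin d => b i ≠ b (succ' i)).card
  + (if b (lastIdx hd) = 0 then 0 else 1)

noncomputable instance : DecidableEq (Composition d) := fun _ _ => Classical.propDecidable _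

lemma sum_single_smul (L : Composition d) (t : ℚ) (v : Composition d → Fin d → ℚ) :
    ∑ L' : Composition d, (if L' = L then t else 0) • v L' = t • v L := by
  classical
  rw [Finset.sum_eq_single L]
  · simp
  · intro L' _ hne; simp [hne]
  · intro h; exact absurd (Finset.mem_univ L) h

lemma decomp (hd : 1 ≤ d) (a : Fin d → ℚ) (ha_mono : Antitone a) (ha_nonneg : ∀ i, 0 ≤ a i)
    (ha_pos : 0 < ∑ i, a i) :
    ∀ N : ℕ, ∀ b : Fin d → ℚ, mu hd a b ≤ N → Antitone b → (∀ i, 0 ≤ b i) →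
    (∀ n, 0 ≤ slackQ a b n) →
    ∃ τ : Composition d → ℚ, (∀ L, 0 ≤ τ L) ∧ b = ∑ L : Composition d, τ L • vSeq L a := by
  classical
  intro N
  induction N with
  | zero =>
    intro b hmu hbm hbn hbs
    have h3 : b (lastIdx hd) = 0 := by
      by_contra hc
      unfold mu at hmu
      rw [if_neg hc] at hmu
      omega
    have h2 : ∀ i, b i = b (succ' i) := by
      intro i
      by_contra hc
      have hpos : 0 < (Finset.univ.filter fun i : Fin d => b i ≠ b (succ' i)).card :=
        Finset.card_pos.2 ⟨i, by simp [hc]⟩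
      unfold mu at hmu
      omega
    have hb0 : b = 0 := by
      funext i
      rw [eq_last_of_succ' hd h2 i, h3]; rfl
    refine ⟨0, fun L => le_refl 0, ?_⟩
    rw [hb0]
    simp
  | succ N ih =>
    intro b hmu hbm hbn hbs
    by_cases hb0 : b = 0
    · refine ⟨0, fun L => le_refl 0, ?_⟩
      rw [hb0]; simp
    · -- setup
      have hBt : 0 < ∑ i, b i := by
        have : ∃ j, b j ≠ 0 := by
          by_contra hc; push_neg at hc
          exact hb0 (funext fun i => hc i)
        obtain ⟨j, hj⟩ := this
        exact Finset.sum_pos' (fun i _ => hbn i)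
          ⟨j, Finset.mem_univ j, lt_of_le_of_ne (hbn j) (Ne.symm hj)⟩
      set A := ∑ i, a i with hA
      set L := mkComp b hbm with hL
      have hbL := mkComp_hbL b hbm
      set w := vSeq L a with hw
      have hwmono : Antitone w := vSeq_antitone L a ha_mono
      have hwnonneg : ∀ i, 0 ≤ w i := vSeq_nonneg L a ha_nonneg
      have hwsum : ∑ i, w i = A := sum_vSeq L a
      have hwpre : ∀ n, ∑ i ∈ Finset.Iic n, w i ≤ ∑ i ∈ Finset.Iic n, a i :=
        sum_Iic_vSeq_le L a ha_mono
      have hwconst : ∀ i j, b i = b j → w i = w j := fun i j h => vSeq_const L a ((hbL i j).2 h)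
      have hbs' : ∀ m : Fin d, 0 ≤ (∑ i, b i) * (∑ i ∈ Finset.Iic m, a i)
          - (∑ i, a i) * (∑ i ∈ Finset.Iic m, b i) := hbs
      have hW4 : ∀ n, slackQ a b n = 0 →
          ∑ i ∈ Finset.Iic n, w i = ∑ i ∈ Finset.Iic n, a i := fun n hn =>
        sum_Iic_vSeq_eq_of_tight L a b ha_mono hbL hBt hbs' n hn
      have hW5 : b (lastIdx hd) = 0 → w (lastIdx hd) = 0 := fun h =>
        vSeq_lastIdx_zero L hd a b ha_nonneg hbL hBt hbs' h
      set D : Fin d → ℚ := fun n =>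
        A * ((∑ i ∈ Finset.Iic n, a i) - ∑ i ∈ Finset.Iic n, w i) with hD
      have hD0 : ∀ n, 0 ≤ D n := fun n =>
        mul_nonneg (le_of_lt ha_pos) (sub_nonneg.2 (hwpre n))
      set T : Finset ℚ := insert ((∑ i, b i) / A)
        ((((Finset.univ.filter fun n => 0 < D n).image fun n => slackQ a b n / D n)
         ∪ ((Finset.univ.filter fun i => w (succ' i) < w i).image
              fun i => (b i - b (succ' i)) / (w i - w (succ' i))))
         ∪ ((Finset.univ.filter fun i : Fin d => i = lastIdx hd ∧ 0 < w i).image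
              fun i => b i / w i)) with hT
      have hTne : T.Nonempty := ⟨_, Finset.mem_insert_self _ _⟩
      set t := T.min' hTne with ht
      have ht0 : 0 ≤ t := by
        apply Finset.le_min'
        intro y hy
        simp only [hT, Finset.mem_insert, Finset.mem_union, Finset.mem_image,
          Finset.mem_filter, Finset.mem_univ, true_and] at hy
        rcases hy with rfl | ((⟨n, hn, rfl⟩ | ⟨i, hi, rfl⟩) | ⟨i, ⟨_, hwi⟩, rfl⟩)
        · exact div_nonneg (le_of_lt hBt) (le_of_lt ha_pos)
        · exact div_nonneg (hbs n) (hD0 n)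
        · exact div_nonneg (sub_nonneg.2 (hbm (le_succ' i))) (sub_nonneg.2 (le_of_lt hi))
        · exact div_nonneg (hbn i) (le_of_lt hwi)
      set c : Fin d → ℚ := fun i => b i - t * w i with hc
      have hcmono : Antitone c := by
        apply antitone_of_succ'
        intro i
        by_cases hwi : w (succ' i) < w i
        · have hmem : (b i - b (succ' i)) / (w i - w (succ' i)) ∈ T := by
            simp only [hT, Finset.mem_insert, Finset.mem_union, Finset.mem_image,
              Finset.mem_filter, Finset.mem_univ, true_and]
            exact Or.inr (Or.inl (Or.inr ⟨i, hwi, rfl⟩))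
          have hle := Finset.min'_le T _ hmem
          rw [le_div_iff₀ (sub_pos.2 hwi)] at hle
          simp only [hc]
          linarith
        · have hweq : w (succ' i) = w i :=
            le_antisymm (hwmono (le_succ' i)) (le_of_not_gt hwi)
          have := hbm (le_succ' i)
          simp only [hc, hweq]
          linarith
      have hclast : 0 ≤ c (lastIdx hd) := by
        by_cases hwl : 0 < w (lastIdx hd)
        · have hmem : b (lastIdx hd) / w (lastIdx hd) ∈ T := by
            simp only [hT, Finset.mem_insert, Finset.mem_union, Finset.mem_image,
              Finset.mem_filter, Finset.mem_univ, true_and]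
            exact Or.inr (Or.inr ⟨lastIdx hd, ⟨rfl, hwl⟩, rfl⟩)
          have hle := Finset.min'_le T _ hmem
          rw [le_div_iff₀ hwl] at hle
          simp only [hc]
          linarith
        · have hweq : w (lastIdx hd) = 0 :=
            le_antisymm (le_of_not_gt hwl) (hwnonneg _)
          simp only [hc, hweq]
          have := hbn (lastIdx hd)
          linarith
      have hcnonneg : ∀ i, 0 ≤ c i := fun i =>
        le_trans hclast (hcmono (le_lastIdx hd i))
      have hcIic : ∀ n : Fin d, ∑ i ∈ Finset.Iic n, c i
          = (∑ i ∈ Finset.Iic n, b i) - t * ∑ i ∈ Finset.Iic n, w i := by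
        intro n
        simp [hc, Finset.sum_sub_distrib, Finset.mul_sum]
      have hcsum : ∑ i, c i = (∑ i, b i) - t * A := by
        rw [← hwsum]
        simp [hc, Finset.sum_sub_distrib, Finset.mul_sum]
      have hslackc : ∀ n, slackQ a c n = slackQ a b n - t * D n := by
        intro n
        unfold slackQ
        rw [hcsum, hcIic n]
        simp only [hD, ← hA]
        ring
      have hcslack : ∀ n, 0 ≤ slackQ a c n := by
        intro n
        rw [hslackc n]
        by_cases hDn : 0 < D n
        · have hmem : slackQ a b n / D n ∈ T := by
            simp only [hT, Finset.mem_insert, Finset.mem_union, Finset.mem_image,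
              Finset.mem_filter, Finset.mem_univ, true_and]
            exact Or.inr (Or.inl (Or.inl ⟨n, hDn, rfl⟩))
          have hle := Finset.min'_le T _ hmem
          rw [le_div_iff₀ hDn] at hle
          linarith
        · have : D n = 0 := le_antisymm (le_of_not_gt hDn) (hD0 n)
          rw [this]
          have := hbs n
          unfold slackQ at this ⊢
          linarith
      -- preservation of tight constraints
      have hpres1 : ∀ n, slackQ a b n = 0 → slackQ a c n = 0 := by
        intro n hn
        have hDn : D n = 0 := by
          simp only [hD]
          rw [hW4 n hn]
          ring
        rw [hslackc n, hn, hDn]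
        ring
      have hpres2 : ∀ i, b i = b (succ' i) → c i = c (succ' i) := by
        intro i hi
        simp only [hc]
        rw [hi, hwconst i (succ' i) hi]
      have hpres3 : b (lastIdx hd) = 0 → c (lastIdx hd) = 0 := by
        intro h
        simp only [hc]
        rw [h, hW5 h]
        ring
      by_cases hc0 : c = 0
      · -- b is a multiple of one generator
        refine ⟨fun L' => if L' = L then t else 0, ?_, ?_⟩
        · intro L'
          dsimp only
          split_ifs with h
          · exact ht0
          · exact le_refl 0
        · have hbtw : ∀ i, b i = t * w i := by
            intro i
            have := congrFun hc0 i
            simp only [hc, Pi.zero_apply] at this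
            linarith
          rw [sum_single_smul L t (fun L' => vSeq L' a)]
          funext i
          simp only [Pi.smul_apply, smul_eq_mul]
          exact hbtw i
      · -- recurse
        have htT : t ∈ T := Finset.min'_mem T hTne
        have hmuc : mu hd a c < mu hd a b := by
          have hsub1 : (Finset.univ.filter fun n => slackQ a c n ≠ 0)
              ⊆ (Finset.univ.filter fun n => slackQ a b n ≠ 0) := by
            intro n hn
            simp only [Finset.mem_filter, Finset.mem_univ, true_and] at hn ⊢
            intro hcon
            exact hn (hpres1 n hcon)
          have hsub2 : (Finset.univ.filter fun i : Fin d => c i ≠ c (succ' i))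
              ⊆ (Finset.univ.filter fun i : Fin d => b i ≠ b (succ' i)) := by
            intro i hi
            simp only [Finset.mem_filter, Finset.mem_univ, true_and] at hi ⊢
            intro hcon
            exact hi (hpres2 i hcon)
          have hle3 : (if c (lastIdx hd) = 0 then 0 else 1)
              ≤ ((if b (lastIdx hd) = 0 then 0 else 1) : ℕ) := by
            by_cases hbl : b (lastIdx hd) = 0
            · rw [if_pos hbl, if_pos (hpres3 hbl)]
            · split_ifs <;> omega
          simp only [hT, Finset.mem_insert, Finset.mem_union, Finset.mem_image,
            Finset.mem_filter, Finset.mem_univ, true_and] at htT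
          rcases htT with heq | ((⟨n, hDn, heq⟩ | ⟨i, hwi, heq⟩) | ⟨i, ⟨hil, hwi⟩, heq⟩)
          · exfalso
            apply hc0
            have hsum0 : ∑ i, c i = 0 := by
              rw [hcsum, heq, div_mul_cancel₀ _ (ne_of_gt ha_pos)]
              ring
            have := (Finset.sum_eq_zero_iff_of_nonneg (fun i _ => hcnonneg i)).1 hsum0
            funext i
            exact this i (Finset.mem_univ i)
          · have hnewc : slackQ a c n = 0 := by
              rw [hslackc n, ← heq, div_mul_cancel₀ _ (ne_of_gt hDn)]
              ring
            have hnewb : slackQ a b n ≠ 0 := by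
              intro hcon
              have hDn0 : D n = 0 := by
                simp only [hD]; rw [hW4 n hcon]; ring
              rw [hDn0] at hDn
              exact lt_irrefl 0 hDn
            have hss : (Finset.univ.filter fun n => slackQ a c n ≠ 0)
                ⊂ (Finset.univ.filter fun n => slackQ a b n ≠ 0) := by
              refine ⟨hsub1, fun hall => ?_⟩
              have := hall (Finset.mem_filter.2 ⟨Finset.mem_univ n, hnewb⟩)
              simp only [Finset.mem_filter, Finset.mem_univ, true_and] at this
              exact this hnewc
            have h1 := Finset.card_lt_card hss
            have h2 := Finset.card_le_card hsub2
            unfold mu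
            omega
          · have hnewc : c i = c (succ' i) := by
              have hd0 : w i - w (succ' i) ≠ 0 := ne_of_gt (sub_pos.2 hwi)
              have hkey : t * (w i - w (succ' i)) = b i - b (succ' i) := by
                rw [← heq, div_mul_cancel₀ _ hd0]
              simp only [hc]
              ring_nf at hkey ⊢
              linarith
            have hnewb : b i ≠ b (succ' i) := by
              intro hcon
              rw [hwconst i (succ' i) hcon] at hwi
              exact lt_irrefl _ hwi
            have hss : (Finset.univ.filter fun i : Fin d => c i ≠ c (succ' i))
                ⊂ (Finset.univ.filter fun i : Fin d => b i ≠ b (succ' i)) := by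
              refine ⟨hsub2, fun hall => ?_⟩
              have := hall (Finset.mem_filter.2 ⟨Finset.mem_univ i, hnewb⟩)
              simp only [Finset.mem_filter, Finset.mem_univ, true_and] at this
              exact this hnewc
            have h1 := Finset.card_lt_card hss
            have h2 := Finset.card_le_card hsub1
            unfold mu
            omega
          · subst hil
            have hnewc : c (lastIdx hd) = 0 := by
              simp only [hc]
              rw [← heq, div_mul_cancel₀ _ (ne_of_gt hwi)]
              ring
            have hnewb : b (lastIdx hd) ≠ 0 := by
              intro hcon
              rw [hW5 hcon] at hwi
              exact lt_irrefl 0 hwi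
            have h1 := Finset.card_le_card hsub1
            have h2 := Finset.card_le_card hsub2
            unfold mu
            rw [if_pos hnewc, if_neg hnewb]
            omega
        obtain ⟨τ', hτ'0, hτ'⟩ := ih c (by omega) hcmono hcnonneg hcslack
        refine ⟨fun L' => τ' L' + (if L' = L then t else 0), ?_, ?_⟩
        · intro L'
          apply add_nonneg (hτ'0 L')
          split_ifs with h
          · exact ht0
          · exact le_refl 0
        · have hsum2 : ∑ L' : Composition d,
              (τ' L' + if L' = L then t else 0) • vSeq L' a
              = (∑ L' : Composition d, τ' L' • vSeq L' a) + t • vSeq L a := by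
            rw [← sum_single_smul L t (fun L' => vSeq L' a), ← Finset.sum_add_distrib]
            apply Finset.sum_congr rfl
            intro L' _
            rw [add_smul]
          rw [hsum2, ← hτ']
          funext i
          simp only [Pi.add_apply, Pi.smul_apply, smul_eq_mul, hc]
          ring

end ConeAux

/-- The cone `C(a)` is generated by the finitely many sequences `v(L,a)`, `L` a composition
of `d`: a nonincreasing nonnegative sequence `b` satisfies
`|a|·(b 0 + … + b n) ≤ |b|·(a 0 + … + a n)` for every `n < d` if and only if `b` is a
nonnegative rational combination of the `v(L,a)`. -/
theorem cone_generated_by_vSeq (d : ℕ) (hd : 1 ≤ d) (a : Fin d → ℚ)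
    (ha_mono : Antitone a) (ha_nonneg : ∀ i, 0 ≤ a i) (ha_pos : 0 < ∑ i, a i)
    (b : Fin d → ℚ) (hb_mono : Antitone b) (hb_nonneg : ∀ i, 0 ≤ b i) :
    (∀ n : Fin d,
        (∑ i, a i) * (∑ i ∈ Finset.Iic n, b i) ≤ (∑ i, b i) * (∑ i ∈ Finset.Iic n, a i))
      ↔ ∃ τ : Composition d → ℚ, (∀ L, 0 ≤ τ L) ∧
          b = ∑ L : Composition d, τ L • vSeq L a := by
  constructor
  · intro hineq
    have hs : ∀ n, 0 ≤ ConeAux.slackQ a b n := by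
      intro n
      unfold ConeAux.slackQ
      linarith [hineq n]
    exact ConeAux.decomp hd a ha_mono ha_nonneg ha_pos (ConeAux.mu hd a b) b le_rfl
      hb_mono hb_nonneg hs
  · rintro ⟨τ, hτ0, rfl⟩
    intro n
    have hPB : ∀ s : Finset (Fin d),
        ∑ i ∈ s, (∑ L : Composition d, τ L • vSeq L a) i
          = ∑ L : Composition d, τ L * ∑ i ∈ s, vSeq L a i := by
      intro s
      calc ∑ i ∈ s, (∑ L : Composition d, τ L • vSeq L a) i
          = ∑ i ∈ s, ∑ L : Composition d, τ L * vSeq L a i := by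
            apply Finset.sum_congr rfl
            intro i _
            rw [Finset.sum_apply]
            simp only [Pi.smul_apply, smul_eq_mul]
        _ = ∑ L : Composition d, ∑ i ∈ s, τ L * vSeq L a i := Finset.sum_comm
        _ = ∑ L : Composition d, τ L * ∑ i ∈ s, vSeq L a i := by
            apply Finset.sum_congr rfl
            intro L _
            rw [Finset.mul_sum]
    rw [hPB, hPB]
    rw [Finset.mul_sum, Finset.sum_mul]
    apply Finset.sum_le_sum
    intro L _
    rw [ConeAux.sum_vSeq L a]
    have hle := ConeAux.sum_Iic_vSeq_le L a ha_mono n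
    have h2 : 0 ≤ τ L := hτ0 L
    nlinarith [mul_le_mul_of_nonneg_left hle (mul_nonneg h2 (le_of_lt ha_pos))]
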